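/- Let Δ be the root system of a complex simple Lie algebra with base of simple roots Δ⁰, and let Σ ⊆ Δ⁰ be a nonempty subset containing a root ζ which is adjacent in the Dynkin diagram to every other root of Σ. If α ∈ Σ∖{ζ} and β ∈ Υ¹_α, then ζ + β is a root. -/
import Mathlib


open scoped RealInnerProductSpace BigOperators Classical

/-- A reduced crystallographic root system in a real inner product space,
together with a chosen base of simple roots and the coordinates of each
root with respect to the base. -/
structure RootSystemBase (V : Type*) [NormedAddCommGroup V] [InnerProductSpace ℝ V] where
  /-- the set of roots -/
  Δ : Finset V
  /-- the set of simple roots (the base) -/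
  Δ0 : Finset V
  base_sub : Δ0 ⊆ Δ
  ne_zero : ∀ β ∈ Δ, β ≠ (0 : V)
  indep : LinearIndependent ℝ (fun a : ↥Δ0 => (a : V))
  neg_mem : ∀ β ∈ Δ, -β ∈ Δ
  /-- `coeff β α` is the coefficient `n_α` of the simple root `α` in `β = ∑ n_α • α` -/
  coeff : V → V → ℤ
  coeff_spec : ∀ β ∈ Δ, β = ∑ α ∈ Δ0, (coeff β α : ℝ) • α
  coeff_sign : ∀ β ∈ Δ, (∀ α ∈ Δ0, 0 ≤ coeff β α) ∨ (∀ α ∈ Δ0, coeff β α ≤ 0)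
  crystal : ∀ α ∈ Δ, ∀ β ∈ Δ, ∃ k : ℤ, 2 * ⟪β, α⟫ / ⟪α, α⟫ = (k : ℝ)
  reflect_mem : ∀ α ∈ Δ, ∀ β ∈ Δ, β - (2 * ⟪β, α⟫ / ⟪α, α⟫) • α ∈ Δ
  reduced : ∀ α ∈ Δ, (2 : ℝ) • α ∉ Δ

namespace RootSystemBase

variable {V : Type*} [NormedAddCommGroup V] [InnerProductSpace ℝ V]

variable (R : RootSystemBase V)

/-- The height `ht_Σ(β)` of a root `β` relative to a subset `Sg` of the simple roots. -/
def ht (Sg : Finset V) (β : V) : ℤ := ∑ α ∈ Sg, R.coeff β α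

/-- positive roots -/
def IsPos (β : V) : Prop := β ∈ R.Δ ∧ ∀ α ∈ R.Δ0, 0 ≤ R.coeff β α

/-- negative roots -/
def IsNeg (β : V) : Prop := β ∈ R.Δ ∧ ∀ α ∈ R.Δ0, R.coeff β α ≤ 0

/-- Irreducibility of the root system (the Dynkin diagram is connected); this is
equivalent to the corresponding complex Lie algebra being simple. -/
def Irred : Prop :=
  ¬ ∃ S : Finset V, S ⊆ R.Δ0 ∧ S.Nonempty ∧ S ≠ R.Δ0 ∧
      ∀ a ∈ S, ∀ b ∈ R.Δ0, b ∉ S → ⟪a, b⟫ = 0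

/-- Adjacency of two (simple) roots in the Dynkin diagram. -/
def Adj (a b : V) : Prop := a ≠ b ∧ ⟪a, b⟫ ≠ 0

end RootSystemBase

namespace RootSystemBase

variable {V : Type*} [NormedAddCommGroup V] [InnerProductSpace ℝ V]

variable (R : RootSystemBase V)

/-- `R.comp ζ α` is the connected component containing `α` of the Dynkin diagram of
`Δ⁰ ∖ {ζ}`:  all simple roots `γ ≠ ζ` joined to `α` by a path of adjacent simple
roots avoiding `ζ`. -/
def comp (ζ α : V) : Set V :=
  {γ : V | γ ∈ R.Δ0 ∧ γ ≠ ζ ∧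
    Relation.ReflTransGen
      (fun u w => u ∈ R.Δ0 ∧ w ∈ R.Δ0 ∧ u ≠ ζ ∧ w ≠ ζ ∧ Adj u w) α γ}

/-- `Υ¹_α`: the roots of the form `β = α + ∑ nᵢ βᵢ` with `βᵢ ∈ Υ_α ∖ {α}` and
`nᵢ > 0` (`m ≥ 0` summands); equivalently the roots of `{α}`-height one in the
subsystem with simple roots `Υ_α`. -/
def Ups1 (ζ α : V) : Set V :=
  {β : V | β ∈ R.Δ ∧ ∃ n : V → ℕ,
      (∀ γ : V, n γ ≠ 0 → γ ∈ R.comp ζ α ∧ γ ≠ α) ∧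
      β = α + ∑ γ ∈ R.Δ0, (n γ : ℝ) • γ}

end RootSystemBase

namespace RootSystemBase

variable {V : Type*} [NormedAddCommGroup V] [InnerProductSpace ℝ V]

variable (R : RootSystemBase V)

/-- A linear combination of the simple roots vanishes only if all coefficients vanish. -/
lemma coeffs_eq_zero (c : V → ℝ) (h : ∑ γ ∈ R.Δ0, c γ • γ = 0) :
    ∀ γ ∈ R.Δ0, c γ = 0 := by
  intro γ hγ
  have h2 := Fintype.linearIndependent_iff.mp R.indep (fun i : ↥R.Δ0 => c i)
  have hs : ∑ i : ↥R.Δ0, c i • (i : V) = 0 := by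
    rw [Finset.sum_coe_sort R.Δ0 (fun γ => c γ • γ)]; exact h
  exact h2 hs ⟨γ, hγ⟩

/-- If `a, b` are roots with positive inner product which are not positive multiples
of one another, then `a - b` is a root. -/
lemma sub_mem' {a b : V} (ha : a ∈ R.Δ) (hb : b ∈ R.Δ)
    (hpos : 0 < ⟪a, b⟫) (hpar : ‖b‖ • a ≠ ‖a‖ • b) : a - b ∈ R.Δ := by
  have ha0 : a ≠ 0 := R.ne_zero a ha
  have hb0 : b ≠ 0 := R.ne_zero b hb
  have hna : (0:ℝ) < ‖a‖ := norm_pos_iff.mpr ha0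
  have hnb : (0:ℝ) < ‖b‖ := norm_pos_iff.mpr hb0
  have haa : (0:ℝ) < ⟪a, a⟫ := by rw [real_inner_self_eq_norm_mul_norm]; exact mul_pos hna hna
  have hbb : (0:ℝ) < ⟪b, b⟫ := by rw [real_inner_self_eq_norm_mul_norm]; exact mul_pos hnb hnb
  obtain ⟨k₁, hk₁⟩ := R.crystal b hb a ha
  obtain ⟨k₂, hk₂⟩ := R.crystal a ha b hb
  have hCS : ⟪a, b⟫ < ‖a‖ * ‖b‖ := inner_lt_norm_mul_iff_real.mpr hpar
  have hk₁pos : 0 < k₁ := by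
    have : (0:ℝ) < (k₁ : ℝ) := by
      rw [← hk₁]; exact div_pos (by linarith) hbb
    exact_mod_cast this
  have hk₂pos : 0 < k₂ := by
    have : (0:ℝ) < (k₂ : ℝ) := by
      rw [← hk₂, real_inner_comm a b]; exact div_pos (by linarith) haa
    exact_mod_cast this
  have hprod : (k₁ : ℝ) * (k₂ : ℝ) < 4 := by
    rw [← hk₁, ← hk₂, real_inner_comm a b,
      real_inner_self_eq_norm_mul_norm, real_inner_self_eq_norm_mul_norm,
      div_mul_div_comm, div_lt_iff₀ (by positivity)]
    nlinarith [mul_lt_mul'' hCS hCS hpos.le hpos.le]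
  have hprodZ : k₁ * k₂ < 4 := by exact_mod_cast hprod
  have hone : k₁ = 1 ∨ k₂ = 1 := by
    by_contra hc
    push_neg at hc
    have h1 : 2 ≤ k₁ := by omega
    have h2 : 2 ≤ k₂ := by omega
    nlinarith
  rcases hone with h1 | h2
  · have h := R.reflect_mem b hb a ha
    rw [hk₁, h1] at h
    simpa using h
  · have h := R.reflect_mem a ha b hb
    rw [hk₂, h2] at h
    simp only [Int.cast_one, one_smul] at h
    have := R.neg_mem _ h
    rwa [neg_sub] at this

/-- Distinct simple roots have nonpositive inner product. -/
lemma obtuse {a b : V} (ha : a ∈ R.Δ0) (hb : b ∈ R.Δ0) (hab : a ≠ b) : ⟪a, b⟫ ≤ 0 := by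
  by_contra hcon
  push_neg at hcon
  have hpar : ‖b‖ • a ≠ ‖a‖ • b := by
    intro he
    have hsum : ∑ γ ∈ R.Δ0,
        ((if γ = a then ‖b‖ else 0) + (if γ = b then -‖a‖ else 0)) • γ = 0 := by
      simp only [add_smul, Finset.sum_add_distrib, ite_smul, zero_smul,
        Finset.sum_ite_eq', ha, hb, if_true, neg_smul]
      rw [he]; abel
    have hz := R.coeffs_eq_zero _ hsum a ha
    rw [if_pos rfl, if_neg hab] at hz
    have : ‖b‖ = 0 := by linarith
    exact R.ne_zero b (R.base_sub hb) (norm_eq_zero.mp this)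
  have hmem : a - b ∈ R.Δ := R.sub_mem' (R.base_sub ha) (R.base_sub hb) hcon hpar
  have hspec := R.coeff_spec _ hmem
  have hzero : ∑ γ ∈ R.Δ0,
      ((R.coeff (a - b) γ : ℝ) - (if γ = a then 1 else 0) + (if γ = b then 1 else 0)) • γ
        = 0 := by
    simp only [add_smul, sub_smul, Finset.sum_add_distrib, Finset.sum_sub_distrib,
      ite_smul, zero_smul, one_smul, Finset.sum_ite_eq', ha, hb, if_true]
    rw [← hspec]; abel
  have hca := R.coeffs_eq_zero _ hzero a ha
  have hcb := R.coeffs_eq_zero _ hzero b hb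
  rw [if_pos rfl, if_neg hab] at hca
  rw [if_neg (Ne.symm hab), if_pos rfl] at hcb
  have hca' : R.coeff (a - b) a = 1 := by
    have h1 : ((R.coeff (a - b) a : ℝ)) = 1 := by linarith
    exact_mod_cast h1
  have hcb' : R.coeff (a - b) b = -1 := by
    have h1 : ((R.coeff (a - b) b : ℝ)) = -1 := by linarith
    exact_mod_cast h1
  rcases R.coeff_sign _ hmem with hs | hs
  · have := hs b hb; omega
  · have := hs a ha; omega

end RootSystemBase

/-- Let `Δ` be the root system of a complex simple Lie algebra with
base `Δ⁰`, and let `Σ ⊆ Δ⁰` be nonempty with a root `ζ` adjacent to every other root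
of `Σ`.  If `α ∈ Σ∖{ζ}` and `β ∈ Υ¹_α`, then `ζ + β` is a root. -/
theorem statement8 {V : Type*} [NormedAddCommGroup V] [InnerProductSpace ℝ V]
    (R : RootSystemBase V) (hirr : R.Irred)
    (Sg : Finset V) (hSg : Sg ⊆ R.Δ0)
    (ζ : V) (hζ : ζ ∈ Sg) (hadj : ∀ a ∈ Sg, a ≠ ζ → RootSystemBase.Adj ζ a)
    (α : V) (hα : α ∈ Sg) (hαζ : α ≠ ζ)
    (β : V) (hβ : β ∈ R.Ups1 ζ α) :
    ζ + β ∈ R.Δ := by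
  obtain ⟨hβΔ, n, hn, hsum⟩ := hβ
  have hζ0 : ζ ∈ R.Δ0 := hSg hζ
  have hα0 : α ∈ R.Δ0 := hSg hα
  have hζΔ : ζ ∈ R.Δ := R.base_sub hζ0
  have hζne : ζ ≠ 0 := R.ne_zero ζ hζΔ
  have hαζlt : ⟪α, ζ⟫ < 0 := by
    have h1 : ⟪α, ζ⟫ ≤ 0 := R.obtuse hα0 hζ0 hαζ
    have h2 : ⟪ζ, α⟫ ≠ 0 := (hadj α hα hαζ).2
    rw [real_inner_comm] at h2
    exact lt_of_le_of_ne h1 h2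
  have hterm : ∀ γ ∈ R.Δ0, (n γ : ℝ) * ⟪γ, ζ⟫ ≤ 0 := by
    intro γ hγ
    by_cases hnγ : n γ = 0
    · simp [hnγ]
    · obtain ⟨⟨hγ0, hγζ, -⟩, -⟩ := hn γ hnγ
      have := R.obtuse hγ0 hζ0 hγζ
      exact mul_nonpos_of_nonneg_of_nonpos (by positivity) this
  have hinner : ⟪β, ζ⟫ < 0 := by
    rw [hsum, inner_add_left, sum_inner]
    have hle : ∑ γ ∈ R.Δ0, ⟪(n γ : ℝ) • γ, ζ⟫ ≤ 0 := by
      apply Finset.sum_nonpos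
      intro γ hγ
      rw [real_inner_smul_left]
      exact hterm γ hγ
    linarith
  have hnegζ : -ζ ∈ R.Δ := R.neg_mem ζ hζΔ
  have hpos : 0 < ⟪β, -ζ⟫ := by rw [inner_neg_right]; linarith
  have hpar : ‖-ζ‖ • β ≠ ‖β‖ • (-ζ) := by
    intro he
    rw [norm_neg, smul_neg] at he
    have hzero : ∑ γ ∈ R.Δ0,
        (‖ζ‖ * ((if γ = α then 1 else 0) + (n γ : ℝ)) + ‖β‖ * (if γ = ζ then 1 else 0)) • γ
          = 0 := by
      simp only [mul_add, mul_ite, mul_one, mul_zero, add_smul, Finset.sum_add_distrib,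
        ite_smul, zero_smul, Finset.sum_ite_eq', hα0, hζ0, if_true, mul_smul]
      rw [← Finset.smul_sum]
      have : (‖ζ‖ : ℝ) • α + ‖ζ‖ • ∑ γ ∈ R.Δ0, (n γ : ℝ) • γ + ‖β‖ • ζ
          = ‖ζ‖ • β + ‖β‖ • ζ := by
        rw [hsum, smul_add]
      rw [this, he]; abel
    have hc := R.coeffs_eq_zero _ hzero α hα0
    rw [if_pos rfl, if_neg hαζ] at hc
    have hζnorm : (0:ℝ) < ‖ζ‖ := norm_pos_iff.mpr hζne
    have hna : (0:ℝ) ≤ (n α : ℝ) := by positivity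
    nlinarith
  have hmem := R.sub_mem' hβΔ hnegζ hpos hpar
  rw [sub_neg_eq_add] at hmem
  rwa [add_comm]
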